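/- Let G be a finite group containing subgroups P₁, P₂, P₃ and primes p₁, p₂, p₃ with p₁ ≠ p₂ and p₂ ≠ p₃, such that: each Pᵢ is a pᵢ-group; P₁ normalizes P₂ and P₃, and P₂ normalizes P₃; P₃ ≠ 1; P₂ does not centralize P₃ (so P₂/C_{P₂}(P₃) ≠ 1); and the image of P₁ in its action on P₂/C_{P₂}(P₃) is nontrivial. Suppose moreover that P₁ is cyclic, P₂ and P₃ are abelian, P₂ is noncyclic, and P₂ = [P₂,P₁]. Then G has a commutator [x,y] whose order is not a prime power. -/

import Mathlib

open Finset Subgroup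
open scoped commutatorElement

namespace Tower9

variable {G : Type*} [Group G]

@[reducible] def commGroupOfAbelian (H : Subgroup G) (h : ∀ x ∈ H, ∀ y ∈ H, x * y = y * x) :
    CommGroup ↥H :=
  { (inferInstance : Group ↥H) with
    mul_comm := fun a b => Subtype.ext (h a a.2 b b.2) }

def conjEndo (H : Subgroup G) (u : G) (hu : u ∈ Subgroup.normalizer (H : Set G)) : Monoid.End ↥H where
  toFun x := ⟨u⁻¹ * x * u, by
      have := (Subgroup.mem_normalizer_iff.mp (inv_mem hu)) (x : G)
      simpa [mul_assoc] using this.mp x.2⟩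
  map_one' := by ext; simp
  map_mul' x y := by ext; simp [mul_assoc]

@[simp] lemma conjEndo_apply_coe (H : Subgroup G) (u : G) (hu : u ∈ Subgroup.normalizer (H : Set G)) (x : ↥H) :
    (conjEndo H u hu x : G) = u⁻¹ * x * u := rfl

lemma conjEndo_congr (H : Subgroup G) {u v : G} (h : u = v) (hu : u ∈ Subgroup.normalizer (H : Set G)) :
    conjEndo H u hu = conjEndo H v (h ▸ hu) := by subst h; rfl

lemma conjEndo_one (H : Subgroup G) (h1 : (1:G) ∈ Subgroup.normalizer (H : Set G)) : conjEndo H 1 h1 = 1 := by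
  refine MonoidHom.ext fun x => Subtype.ext ?_
  show (1:G)⁻¹ * ↑x * 1 = ↑x
  simp

lemma conjEndo_mul (H : Subgroup G) (u v : G) (hu : u ∈ Subgroup.normalizer (H : Set G)) (hv : v ∈ Subgroup.normalizer (H : Set G)) :
    conjEndo H u hu * conjEndo H v hv = conjEndo H (v * u) (mul_mem hv hu) := by
  refine MonoidHom.ext fun x => Subtype.ext ?_
  show (conjEndo H u hu (conjEndo H v hv x) : G) = (conjEndo H (v * u) (mul_mem hv hu) x : G)
  simp only [conjEndo_apply_coe]
  group

lemma conjEndo_pow (H : Subgroup G) (u : G) (hu : u ∈ Subgroup.normalizer (H : Set G)) (n : ℕ) :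
    (conjEndo H u hu) ^ n = conjEndo H (u ^ n) (pow_mem hu n) := by
  induction n with
  | zero =>
    rw [pow_zero, conjEndo_congr H (pow_zero u) (pow_mem hu 0), conjEndo_one]
  | succ n ih =>
    rw [pow_succ, ih, conjEndo_mul, conjEndo_congr H (pow_succ' u n).symm (mul_mem hu (pow_mem hu n))]

variable {M : Type*} [CommGroup M]

def Npow (p : ℕ) (σ : Monoid.End M) (x : M) : M :=
  ∏ i ∈ Finset.range p, (σ ^ i) x

lemma prod_zmod {p : ℕ} [NeZero p] (F : ℕ → M) :
    ∏ i : ZMod p, F (i.val) = ∏ i ∈ Finset.range p, F i := by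
  refine Finset.prod_bij' (fun (i : ZMod p) _ => i.val) (fun i _ => (i : ZMod p))
    (fun i _ => Finset.mem_range.mpr (ZMod.val_lt i)) (fun i _ => Finset.mem_univ _)
    ?_ ?_ (fun i _ => rfl)
  · intro i _
    exact ZMod.natCast_zmod_val i
  · intro i hi
    exact ZMod.val_cast_of_lt (Finset.mem_range.mp hi)

lemma pow_end_mod {p : ℕ} (σ : Monoid.End M) (hσ : σ ^ p = 1) (a : ℕ) :
    σ ^ a = σ ^ (a % p) := by
  conv_lhs => rw [← Nat.div_add_mod a p]
  rw [pow_add, pow_mul, hσ, one_pow, one_mul]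

lemma core_average {p : ℕ} (hp : p.Prime)
    (σ τ : Monoid.End M) (hσ : σ ^ p = 1) (hτ : τ ^ p = 1) (hst : σ * τ = τ * σ)
    (e : M)
    (hNτ : Npow p τ e = 1)
    (hN : ∀ m, m < p → Npow p (σ * τ ^ m) e = 1) :
    e ^ p = 1 := by
  haveI : Fact p.Prime := ⟨hp⟩
  haveI : NeZero p := ⟨hp.pos.ne'⟩
  classical
  set g : ZMod p → ZMod p → M := fun i j => (σ ^ i.val) ((τ ^ j.val) e) with hgdef
  have hcommστ : Commute σ τ := hst
  have hNτ' : ∏ j : ZMod p, (τ ^ j.val) e = 1 := by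
    rw [prod_zmod (fun k => (τ ^ k) e)]; exact hNτ
  have key1 : ∀ m : ZMod p, ∏ i : ZMod p, g i (m * i) = 1 := by
    intro m
    have h2 : ∀ i : ZMod p, g i (m * i) = ((σ * τ ^ m.val) ^ i.val) e := by
      intro i
      have e1 : (σ * τ ^ m.val) ^ i.val = σ ^ i.val * (τ ^ m.val) ^ i.val :=
        (hcommστ.pow_right m.val).mul_pow i.val
      have e2 : (τ ^ m.val) ^ i.val = τ ^ ((m * i).val) := by
        rw [← pow_mul, ZMod.val_mul, ← pow_end_mod τ hτ]
      rw [e1, e2]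
      rfl
    calc ∏ i : ZMod p, g i (m * i) = ∏ i : ZMod p, ((σ * τ ^ m.val) ^ i.val) e :=
          Finset.prod_congr rfl fun i _ => h2 i
      _ = ∏ i ∈ Finset.range p, ((σ * τ ^ m.val) ^ i) e := prod_zmod (fun k => ((σ * τ ^ m.val) ^ k) e)
      _ = 1 := hN m.val (ZMod.val_lt m)
  have hinner : ∀ i : ZMod p, ∏ j : ZMod p, g i j = 1 := by
    intro i
    calc ∏ j : ZMod p, g i j = (σ ^ i.val) (∏ j : ZMod p, (τ ^ j.val) e) := by
          rw [map_prod]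
      _ = 1 := by rw [hNτ', map_one]
  have hT : ∏ i : ZMod p, ∏ j : ZMod p, g i j = 1 := Finset.prod_eq_one fun i _ => hinner i
  have hA : ∏ i : ZMod p, ∏ m : ZMod p, g i (m * i) = 1 := by
    rw [Finset.prod_comm]
    exact Finset.prod_eq_one fun m _ => key1 m
  have heq : ∀ i : ZMod p, i ≠ 0 → ∏ m : ZMod p, g i (m * i) = ∏ j : ZMod p, g i j := by
    intro i hi
    exact Fintype.prod_equiv (Equiv.mulRight₀ i hi) _ _ (fun m => rfl)
  have hg00 : ∀ m : ZMod p, g 0 (m * 0) = e := by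
    intro m
    simp [hgdef, ZMod.val_zero]
  have hA' : ∏ m : ZMod p, g 0 (m * 0) = e ^ p := by
    rw [Finset.prod_congr rfl fun m _ => hg00 m]
    simp [ZMod.card]
  have hsplitA := Fintype.prod_eq_mul_prod_compl (0 : ZMod p)
    (fun i => ∏ m : ZMod p, g i (m * i))
  have hsplitT := Fintype.prod_eq_mul_prod_compl (0 : ZMod p)
    (fun i => ∏ j : ZMod p, g i j)
  have hcc : ∏ i ∈ ({(0 : ZMod p)}ᶜ : Finset (ZMod p)), ∏ m : ZMod p, g i (m * i)
      = ∏ i ∈ ({(0 : ZMod p)}ᶜ : Finset (ZMod p)), ∏ j : ZMod p, g i j := by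
    refine Finset.prod_congr rfl fun i hi => heq i ?_
    simpa using hi
  rw [hA, hA'] at hsplitA
  rw [hT, hinner 0, one_mul] at hsplitT
  rw [hcc, ← hsplitT, mul_one] at hsplitA
  exact hsplitA.symm


lemma Npow_mul (p : ℕ) (σ : Monoid.End M) (x y : M) :
    Npow p σ (x * y) = Npow p σ x * Npow p σ y := by
  simp [Npow, map_mul, Finset.prod_mul_distrib]

lemma Npow_inv (p : ℕ) (σ : Monoid.End M) (x : M) :
    Npow p σ x⁻¹ = (Npow p σ x)⁻¹ := by
  simp [Npow, map_inv]

lemma Npow_shift (p : ℕ) (σ : Monoid.End M) (hσ : σ ^ p = 1) (x : M) :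
    Npow p σ (σ x) = Npow p σ x := by
  have hstep : ∀ i : ℕ, (σ ^ i) (σ x) = (σ ^ (i + 1)) x := by
    intro i; rw [pow_succ]; rfl
  have h1 : ∏ i ∈ range (p + 1), (σ ^ i) x
      = (∏ i ∈ range p, (σ ^ (i + 1)) x) * (σ ^ 0) x := Finset.prod_range_succ' _ _
  have h2 : ∏ i ∈ range (p + 1), (σ ^ i) x
      = (∏ i ∈ range p, (σ ^ i) x) * (σ ^ p) x := Finset.prod_range_succ _ _
  have e0 : (σ ^ 0) x = x := by rw [pow_zero]; rfl
  have ep : (σ ^ p) x = x := by rw [hσ]; rfl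
  rw [e0] at h1; rw [ep] at h2
  have h3 : (∏ i ∈ range p, (σ ^ (i + 1)) x) * x = (∏ i ∈ range p, (σ ^ i) x) * x :=
    h1.symm.trans h2
  have h4 := mul_right_cancel h3
  unfold Npow
  rw [← h4]
  exact Finset.prod_congr rfl fun i _ => hstep i


lemma order_pow_of_pgroup [Finite G] {p : ℕ} (hp : p.Prime) {P : Subgroup G}
    (hP : IsPGroup p P) {x : G} (hx : x ∈ P) : ∃ k : ℕ, orderOf x = p ^ k := by
  obtain ⟨k, hk⟩ := hP ⟨x, hx⟩
  have : orderOf (⟨x, hx⟩ : ↥P) ∣ p ^ k := orderOf_dvd_of_pow_eq_one hk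
  rw [Subgroup.orderOf_mk] at this
  obtain ⟨m, _, hm⟩ := (Nat.dvd_prime_pow hp).mp this
  exact ⟨m, hm⟩

lemma exists_indep [Finite G] {P : Subgroup G} {p : ℕ}
    (hp : p.Prime) (hP : IsPGroup p P) (hab : ∀ x ∈ P, ∀ y ∈ P, x * y = y * x)
    (hnc : ¬ IsCyclic ↥P) :
    ∃ s t : G, s ∈ P ∧ t ∈ P ∧ orderOf s = p ∧ orderOf t = p ∧ t ∉ Subgroup.zpowers s := by
  haveI : Fact p.Prime := ⟨hp⟩
  by_contra hcon
  push_neg at hcon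
  -- get a maximal-order element x
  obtain ⟨x, hxP, hxmax⟩ := Set.exists_max_image (P : Set G) orderOf (Set.toFinite _)
    ⟨1, one_mem P⟩
  -- claim : every element of P is a zpower of x
  have claim : ∀ y ∈ P, y ∈ Subgroup.zpowers x := by
    by_contra hy0
    push_neg at hy0
    have hSfin : ({y | y ∈ P ∧ y ∉ Subgroup.zpowers x} : Set G).Finite := Set.toFinite _
    obtain ⟨y, ⟨hyP, hyz⟩, hymin⟩ := Set.exists_min_image _ orderOf hSfin
      (by obtain ⟨y, h1, h2⟩ := hy0; exact ⟨y, h1, h2⟩)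
    have hxne : x ≠ 1 := by
      rintro rfl
      have h1 : orderOf y ≤ 1 := by simpa using hxmax y hyP
      have : y = 1 := by
        have := orderOf_eq_one_iff.mp (le_antisymm h1 (Nat.one_le_iff_ne_zero.mpr
          (orderOf_pos y).ne'))
        exact this
      exact hyz (by rw [this]; exact one_mem _)
    have hyne : y ≠ 1 := fun h => hyz (h ▸ one_mem _)
    obtain ⟨k, hk⟩ := order_pow_of_pgroup hp hP hyP
    obtain ⟨j, hj⟩ := order_pow_of_pgroup hp hP hxP
    have hk1 : 1 ≤ k := by
      rcases Nat.eq_zero_or_pos k with h | h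
      · exfalso; exact hyne (orderOf_eq_one_iff.mp (by rw [hk, h, pow_zero]))
      · exact h
    have hj1 : 1 ≤ j := by
      rcases Nat.eq_zero_or_pos j with h | h
      · exfalso; exact hxne (orderOf_eq_one_iff.mp (by rw [hj, h, pow_zero]))
      · exact h
    have hkj : k ≤ j := by
      have := hxmax y hyP
      rw [hk, hj] at this
      exact (Nat.pow_le_pow_iff_right hp.one_lt).mp this
    -- y ^ p has smaller order, so it lies in zpowers x
    have hyp_ord : orderOf (y ^ p) = p ^ (k - 1) := by
      rw [orderOf_pow, hk]
      have : Nat.gcd (p ^ k) p = p := by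
        rw [Nat.gcd_comm]
        exact Nat.gcd_eq_left (dvd_pow_self p (Nat.one_le_iff_ne_zero.mp hk1))
      rw [this, ← Nat.pow_div hk1 hp.pos, Nat.pow_one]
    have hyplt : orderOf (y ^ p) < orderOf y := by
      rw [hyp_ord, hk]
      exact Nat.pow_lt_pow_right hp.one_lt (by omega)
    have hypz : y ^ p ∈ Subgroup.zpowers x := by
      by_contra h
      have := hymin (y ^ p) ⟨pow_mem hyP p, h⟩
      omega
    -- write y ^ p = x ^ n with n : ℕ
    have : y ^ p ∈ Submonoid.powers x := by
      rw [mem_powers_iff_mem_zpowers]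
      exact hypz
    obtain ⟨n, hn0⟩ := this
    have hn : x ^ n = y ^ p := hn0
    -- p ∣ n
    have hpn : p ∣ n := by
      by_contra hpn
      have hcop : Nat.Coprime (p ^ j) n :=
        Nat.Coprime.pow_left j ((Nat.Prime.coprime_iff_not_dvd hp).mpr hpn)
      have : orderOf (x ^ n) = p ^ j := by
        rw [orderOf_pow, hj, Nat.Coprime.gcd_eq_one hcop, Nat.div_one]
      rw [hn, hyp_ord] at this
      have : p ^ (k-1) < p ^ j := by
        calc p ^ (k-1) < p ^ k := Nat.pow_lt_pow_right hp.one_lt (by omega)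
          _ ≤ p ^ j := Nat.pow_le_pow_right hp.pos hkj
      omega
    obtain ⟨m, rfl⟩ := hpn
    -- z := y * (x^m)⁻¹ has order p and is not in zpowers x
    set z := y * (x ^ m)⁻¹ with hzdef
    have hzP : z ∈ P := mul_mem hyP (inv_mem (pow_mem hxP m))
    have hcomm : Commute y ((x ^ m)⁻¹) :=
      (Commute.inv_right (hab y hyP (x ^ m) (pow_mem hxP m)))
    have hzp : z ^ p = 1 := by
      rw [hzdef, hcomm.mul_pow, inv_pow, ← pow_mul, ← hn]
      group
    have hzz : z ∉ Subgroup.zpowers x := by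
      intro h
      apply hyz
      have : y = z * x ^ m := by rw [hzdef]; group
      rw [this]
      exact mul_mem h (pow_mem (Subgroup.mem_zpowers x) m)
    have hzne : z ≠ 1 := by
      intro h
      apply hzz
      rw [h]; exact one_mem _
    have hzord : orderOf z = p := orderOf_eq_prime hzp hzne
    -- s := x ^ (p ^ (j-1)) has order p
    set s := x ^ (p ^ (j - 1)) with hsdef
    have hsord : orderOf s = p := by
      rw [hsdef, orderOf_pow, hj]
      have hg : Nat.gcd (p ^ j) (p ^ (j - 1)) = p ^ (j - 1) := by
        rw [Nat.gcd_comm]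
        exact Nat.gcd_eq_left (pow_dvd_pow p (by omega))
      rw [hg, Nat.pow_div (by omega : j - 1 ≤ j) hp.pos]
      have hje : j - (j - 1) = 1 := by omega
      rw [hje, pow_one]
    have hsP : s ∈ P := pow_mem hxP _
    have := hcon s z hsP hzP hsord hzord
    apply hzz
    have hsx : s ∈ Subgroup.zpowers x := pow_mem (Subgroup.mem_zpowers x) _
    exact (Subgroup.zpowers_le.mpr hsx) this
  -- P is cyclic, contradiction
  apply hnc
  refine ⟨⟨⟨x, hxP⟩, fun w => ?_⟩⟩
  obtain ⟨n, hn⟩ := Subgroup.mem_zpowers_iff.mp (claim w w.2)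
  exact Subgroup.mem_zpowers_iff.mpr ⟨n, Subtype.ext (by rw [← hn]; simp)⟩


lemma commutator_surj (P₁ P₂ : Subgroup G) (a : G)
    (ha : a ∈ P₁) (hgen : ∀ h ∈ P₁, ∃ k : ℕ, a ^ k = h)
    (hn : P₁ ≤ Subgroup.normalizer (P₂ : Set G)) (hab : ∀ x ∈ P₂, ∀ y ∈ P₂, x * y = y * x)
    (heq : ⁅P₂, P₁⁆ = P₂) :
    ∀ v ∈ P₂, ∃ b ∈ P₂, b⁻¹ * (a⁻¹ * b * a) = v := by
  have haN : a ∈ Subgroup.normalizer (P₂ : Set G) := hn ha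
  have hconjmem : ∀ b ∈ P₂, a⁻¹ * b * a ∈ P₂ := by
    intro b hb
    have := (Subgroup.mem_normalizer_iff.mp (inv_mem haN)) b
    simpa [mul_assoc] using this.mp hb
  have hconjmem' : ∀ b ∈ P₂, a * b * a⁻¹ ∈ P₂ := by
    intro b hb
    exact (Subgroup.mem_normalizer_iff.mp haN b).mp hb
  have hφmem : ∀ b ∈ P₂, b⁻¹ * (a⁻¹ * b * a) ∈ P₂ := fun b hb =>
    mul_mem (inv_mem hb) (hconjmem b hb)
  set S : Subgroup G :=
    { carrier := {g | ∃ b ∈ P₂, b⁻¹ * (a⁻¹ * b * a) = g}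
      one_mem' := ⟨1, one_mem P₂, by group⟩
      mul_mem' := by
        rintro g₁ g₂ ⟨b₁, hb₁, rfl⟩ ⟨b₂, hb₂, rfl⟩
        refine ⟨b₁ * b₂, mul_mem hb₁ hb₂, ?_⟩
        have e1 : (b₁ * b₂)⁻¹ * (a⁻¹ * (b₁ * b₂) * a)
            = b₂⁻¹ * (b₁⁻¹ * (a⁻¹ * b₁ * a)) * (a⁻¹ * b₂ * a) := by group
        have e2 : b₂⁻¹ * (b₁⁻¹ * (a⁻¹ * b₁ * a)) = (b₁⁻¹ * (a⁻¹ * b₁ * a)) * b₂⁻¹ :=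
          hab _ (inv_mem hb₂) _ (hφmem b₁ hb₁)
        rw [e1, e2]
        group
      inv_mem' := by
        rintro g ⟨b, hb, rfl⟩
        refine ⟨b⁻¹, inv_mem hb, ?_⟩
        have e1 : (b⁻¹)⁻¹ * (a⁻¹ * b⁻¹ * a) = b * (a⁻¹ * b⁻¹ * a) := by group
        have e2 : b * (a⁻¹ * b⁻¹ * a) = (a⁻¹ * b⁻¹ * a) * b :=
          hab _ hb _ (hconjmem b⁻¹ (inv_mem hb))
        rw [e1, e2]
        group } with hSdef
  have hmemS : ∀ g, g ∈ S ↔ ∃ b ∈ P₂, b⁻¹ * (a⁻¹ * b * a) = g := fun g => Iff.rfl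
  have hconjS : ∀ g ∈ S, a * g * a⁻¹ ∈ S := by
    intro g hg
    obtain ⟨b, hb, rfl⟩ := (hmemS g).mp hg
    refine (hmemS _).mpr ⟨a * b * a⁻¹, hconjmem' b hb, ?_⟩
    group
  have hbase : ∀ g ∈ P₂, ⁅g, a⁆ ∈ S := by
    intro g hg
    have h1 : g⁻¹⁻¹ * (a⁻¹ * g⁻¹ * a) ∈ S := (hmemS _).mpr ⟨g⁻¹, inv_mem hg, rfl⟩
    have h2 := S.inv_mem (hconjS _ h1)
    have e : ⁅g, a⁆ = (a * (g⁻¹⁻¹ * (a⁻¹ * g⁻¹ * a)) * a⁻¹)⁻¹ := by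
      rw [commutatorElement_def]; group
    rw [e]
    exact h2
  have hcomm_le : ⁅P₂, P₁⁆ ≤ S := by
    rw [Subgroup.commutator_le]
    intro g hg h hh
    obtain ⟨k, rfl⟩ := hgen h hh
    induction k with
    | zero =>
      have : ⁅g, a ^ 0⁆ = 1 := by rw [pow_zero, commutatorElement_def]; group
      rw [this]; exact one_mem S
    | succ k ih =>
      have hak : a ^ k ∈ P₁ := pow_mem ha k
      have ihS : ⁅g, a ^ k⁆ ∈ S := ih hak
      have e : ⁅g, a ^ (k+1)⁆ = ⁅g, a⁆ * (a * ⁅g, a ^ k⁆ * a⁻¹) := by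
        simp only [commutatorElement_def, pow_succ]
        group
      rw [e]
      exact S.mul_mem (hbase g hg) (hconjS _ ihS)
  intro v hv
  have hv' : v ∈ ⁅P₂, P₁⁆ := by rw [heq]; exact hv
  exact (hmemS v).mp (hcomm_le hv')

end Tower9


/-- Let `G` be a finite group containing a tower `(P₁,P₂,P₃)` of abelian
subgroups (`Pᵢ` a `pᵢ`-group, `P₁` normalizing `P₂` and `P₃`, `P₂` normalizing `P₃`,
`P₃ ≠ 1`, `P₂` not centralizing `P₃`, the action of `P₁` on `P₂/C_{P₂}(P₃)` nontrivial,
`p₁ ≠ p₂`, `p₂ ≠ p₃`) with `P₁` cyclic, `P₂` noncyclic and `P₂ = [P₂,P₁]`. Then `G` has a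
commutator whose order is not a prime power. -/
theorem exists_commutator_not_prime_power_of_abelian_tower
    (G : Type*) [Group G] [Finite G]
    (P₁ P₂ P₃ : Subgroup G) (p₁ p₂ p₃ : ℕ)
    (hp₁ : p₁.Prime) (hp₂ : p₂.Prime) (hp₃ : p₃.Prime)
    (h12 : p₁ ≠ p₂) (h23 : p₂ ≠ p₃)
    (hP1 : IsPGroup p₁ P₁) (hP2 : IsPGroup p₂ P₂) (hP3 : IsPGroup p₃ P₃)
    (hn12 : P₁ ≤ Subgroup.normalizer (P₂ : Set G)) (hn13 : P₁ ≤ Subgroup.normalizer (P₃ : Set G))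
    (hn23 : P₂ ≤ Subgroup.normalizer (P₃ : Set G))
    (hP3ne : P₃ ≠ ⊥)
    (hP2nc : ¬ P₂ ≤ Subgroup.centralizer (P₃ : Set G))
    (hP1act : ∃ a ∈ P₁, ∃ b ∈ P₂, b⁻¹ * a⁻¹ * b * a ∉ Subgroup.centralizer (P₃ : Set G))
    (hP1cyc : IsCyclic P₁)
    (hP2ab : ∀ x ∈ P₂, ∀ y ∈ P₂, x * y = y * x)
    (hP3ab : ∀ x ∈ P₃, ∀ y ∈ P₃, x * y = y * x)
    (hP2noncyc : ¬ IsCyclic P₂)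
    (hP2eq : ⁅P₂, P₁⁆ = P₂) :
    ∃ x y : G, ¬ ∃ p k : ℕ, p.Prime ∧ orderOf (x⁻¹ * y⁻¹ * x * y) = p ^ k := by
  classical
  haveI : Fact p₂.Prime := ⟨hp₂⟩
  haveI : Fact p₃.Prime := ⟨hp₃⟩
  letI instC : CommGroup ↥P₃ := Tower9.commGroupOfAbelian P₃ hP3ab
  -- a generator of P₁
  obtain ⟨g0, hg0⟩ := hP1cyc.exists_generator
  set a : G := (g0 : G) with hadef
  have haP₁ : a ∈ P₁ := g0.2
  have hgen : ∀ h ∈ P₁, ∃ k : ℕ, a ^ k = h := by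
    intro h hh
    have h1 : (⟨h, hh⟩ : ↥P₁) ∈ Subgroup.zpowers g0 := hg0 _
    have h2 : (⟨h, hh⟩ : ↥P₁) ∈ Submonoid.powers g0 :=
      mem_powers_iff_mem_zpowers.mpr h1
    obtain ⟨k, hk⟩ := h2
    have hk' : g0 ^ k = (⟨h, hh⟩ : ↥P₁) := hk
    refine ⟨k, ?_⟩
    have := congrArg (Subtype.val) hk'
    simpa using this
  have ha3 : a ∈ Subgroup.normalizer (P₃ : Set G) := hn13 haP₁
  -- the generator does not centralize P₃ (three subgroups lemma)
  have hex_c : ∃ c ∈ P₃, a⁻¹ * c * a ≠ c := by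
    by_contra hcon
    push_neg at hcon
    have h13 : ⁅P₁, P₃⁆ = ⊥ := by
      rw [Subgroup.commutator_eq_bot_iff_le_centralizer]
      intro h hh
      rw [Subgroup.mem_centralizer_iff]
      intro c hc
      obtain ⟨k, rfl⟩ := hgen h hh
      have hac : Commute a c := by
        have h' := hcon c hc
        have hca : c * a = a * c := by
          calc c * a = a * (a⁻¹ * c * a) := by group
            _ = a * c := by rw [h']
        exact hca.symm
      exact ((hac.pow_left k).eq).symm
    have h1 : ⁅⁅P₁, P₃⁆, P₂⁆ = ⊥ := by
      rw [h13]
      exact Subgroup.commutator_bot_left P₂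
    have h32le : ⁅P₃, P₂⁆ ≤ P₃ := by
      rw [Subgroup.commutator_le]
      intro g hg h hh
      have hhn : h ∈ Subgroup.normalizer (P₃ : Set G) := hn23 hh
      have hmem : h * g⁻¹ * h⁻¹ ∈ P₃ :=
        (Subgroup.mem_normalizer_iff.mp hhn g⁻¹).mp (inv_mem hg)
      have e : ⁅g, h⁆ = g * (h * g⁻¹ * h⁻¹) := by
        rw [commutatorElement_def]; group
      rw [e]; exact mul_mem hg hmem
    have h2 : ⁅⁅P₃, P₂⁆, P₁⁆ = ⊥ := by
      rw [eq_bot_iff]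
      calc ⁅⁅P₃, P₂⁆, P₁⁆ ≤ ⁅P₃, P₁⁆ := Subgroup.commutator_mono h32le (le_refl _)
        _ = ⁅P₁, P₃⁆ := Subgroup.commutator_comm _ _
        _ = ⊥ := h13
        _ ≤ ⊥ := le_refl _
    have h3 : ⁅⁅P₂, P₁⁆, P₃⁆ = ⊥ :=
      Subgroup.commutator_commutator_eq_bot_of_rotate h1 h2
    rw [hP2eq, Subgroup.commutator_eq_bot_iff_le_centralizer] at h3
    exact hP2nc h3
  obtain ⟨c, hcP, hcne⟩ := hex_c
  have hcaP : a⁻¹ * c * a ∈ P₃ := by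
    have := (Subgroup.mem_normalizer_iff.mp (inv_mem ha3)) c
    simpa [mul_assoc] using this.mp hcP
  have heP : c⁻¹ * (a⁻¹ * c * a) ∈ P₃ := mul_mem (inv_mem hcP) hcaP
  have hene : c⁻¹ * (a⁻¹ * c * a) ≠ 1 := by
    intro h
    apply hcne
    calc a⁻¹ * c * a = c * (c⁻¹ * (a⁻¹ * c * a)) := by group
      _ = c := by rw [h, mul_one]
  set E : ↥P₃ := ⟨c⁻¹ * (a⁻¹ * c * a), heP⟩ with hEdef
  have hEne : E ≠ 1 := by
    intro h
    exact hene (by simpa [hEdef] using congrArg Subtype.val h)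
  -- independent pair in P₂
  obtain ⟨s, t, hsP, htP, hsord, htord, hst⟩ :=
    Tower9.exists_indep hp₂ hP2 hP2ab hP2noncyc
  have hs1 : s ^ p₂ = 1 := by rw [← hsord]; exact pow_orderOf_eq_one s
  have ht1 : t ^ p₂ = 1 := by rw [← htord]; exact pow_orderOf_eq_one t
  -- find u with nontrivial norm of E
  have hEx : ∃ u : G, ∃ hu : u ∈ P₂, orderOf u = p₂ ∧
      Tower9.Npow p₂ (Tower9.conjEndo P₃ u (hn23 hu)) E ≠ 1 := by
    by_contra hcon
    push_neg at hcon
    set σ := Tower9.conjEndo P₃ s (hn23 hsP) with hσdef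
    set τ := Tower9.conjEndo P₃ t (hn23 htP) with hτdef
    have hσp : σ ^ p₂ = 1 := by
      rw [hσdef, Tower9.conjEndo_pow, Tower9.conjEndo_congr P₃ hs1]
      exact Tower9.conjEndo_one P₃ _
    have hτp : τ ^ p₂ = 1 := by
      rw [hτdef, Tower9.conjEndo_pow, Tower9.conjEndo_congr P₃ ht1]
      exact Tower9.conjEndo_one P₃ _
    have hcommst : s * t = t * s := hP2ab s hsP t htP
    have hστ : σ * τ = τ * σ := by
      rw [hσdef, hτdef, Tower9.conjEndo_mul, Tower9.conjEndo_mul]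
      exact Tower9.conjEndo_congr P₃ hcommst.symm _
    have hNτ : Tower9.Npow p₂ τ E = 1 := hcon t htP htord
    have hNm : ∀ m, m < p₂ → Tower9.Npow p₂ (σ * τ ^ m) E = 1 := by
      intro m hm
      have htmP : t ^ m * s ∈ P₂ := mul_mem (pow_mem htP m) hsP
      have hcomm2 : Commute (t ^ m) s := (Commute.pow_left hcommst.symm m)
      have hpow1 : (t ^ m * s) ^ p₂ = 1 := by
        rw [hcomm2.mul_pow, ← pow_mul, mul_comm m p₂, pow_mul, ht1, one_pow, one_mul, hs1]
      have hne1 : t ^ m * s ≠ 1 := by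
        intro hh
        have hsm : s = (t ^ m)⁻¹ := by
          calc s = (t ^ m)⁻¹ * (t ^ m * s) := by group
            _ = (t ^ m)⁻¹ := by rw [hh, mul_one]
        rcases Nat.eq_zero_or_pos m with hm0 | hmpos
        · rw [hm0, pow_zero, inv_one] at hsm
          rw [hsm, orderOf_one] at hsord
          exact hp₂.ne_one hsord.symm
        · have hndvd : ¬ p₂ ∣ m := Nat.not_dvd_of_pos_of_lt hmpos hm
          have hcopm : Nat.Coprime m p₂ :=
            ((Nat.Prime.coprime_iff_not_dvd hp₂).mpr hndvd).symm
          obtain ⟨r, -, hr⟩ := Nat.exists_mul_mod_eq_one_of_coprime hcopm hp₂.one_lt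
          have htm : t ^ m = s⁻¹ := by rw [hsm]; group
          have e2 : t = t ^ (m * r) := by
            conv_lhs => rw [← pow_one t, ← hr]
            rw [← htord, pow_mod_orderOf]
          have h1 : t = (s⁻¹) ^ r := by rw [e2, pow_mul, htm]
          apply hst
          rw [h1]
          exact pow_mem (inv_mem (Subgroup.mem_zpowers s)) r
      have hord : orderOf (t ^ m * s) = p₂ := orderOf_eq_prime hpow1 hne1
      have := hcon (t ^ m * s) htmP hord
      have hrw : σ * τ ^ m = Tower9.conjEndo P₃ (t ^ m * s) (hn23 htmP) := by
        rw [hτdef, Tower9.conjEndo_pow, hσdef, Tower9.conjEndo_mul]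
      rw [hrw]
      exact this
    have hEp : E ^ p₂ = 1 :=
      Tower9.core_average hp₂ σ τ hσp hτp hστ E hNτ hNm
    -- contradiction: E is a nontrivial p₃-element killed by p₂
    have hcoe : (E : G) ^ p₂ = 1 := by
      rw [← SubmonoidClass.coe_pow, hEp, OneMemClass.coe_one]
    have hdvd : orderOf (E : G) ∣ p₂ := orderOf_dvd_of_pow_eq_one hcoe
    obtain ⟨k, hk⟩ := Tower9.order_pow_of_pgroup hp₃ hP3 E.2
    rcases Nat.eq_zero_or_pos k with hk0 | hk1
    · apply hEne
      have : orderOf (E : G) = 1 := by rw [hk, hk0, pow_zero]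
      have hE1 : (E : G) = 1 := orderOf_eq_one_iff.mp this
      exact Subtype.ext (by simpa using hE1)
    · rw [hk] at hdvd
      have : p₃ ∣ p₂ := dvd_trans (dvd_pow_self p₃ hk1.ne') hdvd
      have h32 : p₃ = p₂ := (Nat.prime_dvd_prime_iff_eq hp₃ hp₂).mp this
      exact h23 h32.symm
  obtain ⟨u, huP, huord, hNu⟩ := hEx
  have hu3 : u ∈ Subgroup.normalizer (P₃ : Set G) := hn23 huP
  have hu1 : u ^ p₂ = 1 := by rw [← huord]; exact pow_orderOf_eq_one u
  set σu := Tower9.conjEndo P₃ u hu3 with hσudef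
  have hσup : σu ^ p₂ = 1 := by
    rw [hσudef, Tower9.conjEndo_pow, Tower9.conjEndo_congr P₃ hu1]
    exact Tower9.conjEndo_one P₃ _
  obtain ⟨b, hbP, hbu⟩ :=
    Tower9.commutator_surj P₁ P₂ a haP₁ hgen hn12 hP2ab hP2eq u huP
  -- the element d
  have hucuP : u⁻¹ * c⁻¹ * u ∈ P₃ := by
    have := (Subgroup.mem_normalizer_iff.mp (inv_mem hu3)) c⁻¹
    simpa [mul_assoc] using this.mp (inv_mem hcP)
  have hdP : (u⁻¹ * c⁻¹ * u) * (a⁻¹ * c * a) ∈ P₃ := mul_mem hucuP hcaP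
  set D : ↥P₃ := ⟨(u⁻¹ * c⁻¹ * u) * (a⁻¹ * c * a), hdP⟩ with hDdef
  set d : G := (u⁻¹ * c⁻¹ * u) * (a⁻¹ * c * a) with hddef
  have hgud : (b * c)⁻¹ * a⁻¹ * (b * c) * a = u * d := by
    rw [hddef, ← hbu]; group
  -- key power identity
  have key : ∀ n : ℕ, (u * d) ^ n
      = u ^ n * ((∏ i ∈ Finset.range n, (σu ^ i) D : ↥P₃) : G) := by
    intro n
    induction n with
    | zero => simp
    | succ n ih =>
      rw [pow_succ, ih]
      have hconjprod : σu (∏ i ∈ Finset.range n, (σu ^ i) D)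
          = ∏ i ∈ Finset.range n, (σu ^ (i + 1)) D := by
        rw [map_prod]
        exact Finset.prod_congr rfl fun i _ => by rw [pow_succ']; rfl
      have hsucc : (∏ i ∈ Finset.range (n + 1), (σu ^ i) D : ↥P₃)
          = (∏ i ∈ Finset.range n, (σu ^ (i + 1)) D) * (σu ^ 0) D :=
        Finset.prod_range_succ' _ _
      have hXu : ∀ X : ↥P₃, (X : G) * u = u * (σu X : G) := by
        intro X
        rw [hσudef, Tower9.conjEndo_apply_coe]
        group
      calc u ^ n * ((∏ i ∈ Finset.range n, (σu ^ i) D : ↥P₃) : G) * (u * d)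
          = u ^ n * (((∏ i ∈ Finset.range n, (σu ^ i) D : ↥P₃) : G) * u) * d := by group
        _ = u ^ n * (u * (σu (∏ i ∈ Finset.range n, (σu ^ i) D) : G)) * d := by rw [hXu]
        _ = u ^ (n + 1) * ((σu (∏ i ∈ Finset.range n, (σu ^ i) D) : G) * (D : G)) := by
            rw [pow_succ, hddef, show (D : G) = u⁻¹ * c⁻¹ * u * (a⁻¹ * c * a) from rfl]; group
        _ = u ^ (n + 1) * ((σu (∏ i ∈ Finset.range n, (σu ^ i) D) * D : ↥P₃) : G) := by
            rw [Subgroup.coe_mul]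
        _ = u ^ (n + 1) * ((∏ i ∈ Finset.range (n + 1), (σu ^ i) D : ↥P₃) : G) := by
            rw [hconjprod, hsucc, pow_zero]
            rfl
  -- (u*d)^p₂ equals the norm of E
  have hC : (c : G) ∈ P₃ := hcP
  set C : ↥P₃ := ⟨c, hcP⟩ with hCdef
  have hDdecomp : D = (σu C)⁻¹ * C * E := by
    refine Subtype.ext ?_
    rw [hDdef]
    push_cast [hσudef, Tower9.conjEndo_apply_coe]
    rw [show (C : G) = c from rfl, show (E : G) = c⁻¹ * (a⁻¹ * c * a) from rfl]
    group
  have hNpowD : Tower9.Npow p₂ σu D = Tower9.Npow p₂ σu E := by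
    rw [hDdecomp, Tower9.Npow_mul, Tower9.Npow_mul, Tower9.Npow_inv,
      Tower9.Npow_shift p₂ σu hσup C, inv_mul_cancel, one_mul]
  have hw : (u * d) ^ p₂ = ((Tower9.Npow p₂ σu E : ↥P₃) : G) := by
    rw [key p₂, hu1, one_mul]
    congr 1
  have hwne : ((Tower9.Npow p₂ σu E : ↥P₃) : G) ≠ 1 := by
    intro h
    exact hNu (Subtype.ext (by simpa using h))
  obtain ⟨m, hmord⟩ := Tower9.order_pow_of_pgroup hp₃ hP3 (Tower9.Npow p₂ σu E).2
  have hm1 : 1 ≤ m := by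
    rcases Nat.eq_zero_or_pos m with h0 | h1
    · exfalso
      apply hwne
      exact orderOf_eq_one_iff.mp (by rw [hmord, h0, pow_zero])
    · exact h1
  have hdvd : orderOf (u * d) ∣ p₂ * p₃ ^ m := by
    apply orderOf_dvd_of_pow_eq_one
    rw [pow_mul, hw, ← hmord]
    exact pow_orderOf_eq_one _
  have hp₃N : p₃ ∣ orderOf (u * d) := by
    by_contra h
    have hcop : Nat.Coprime (orderOf (u * d)) (p₃ ^ m) :=
      Nat.Coprime.pow_right m (((Nat.Prime.coprime_iff_not_dvd hp₃).mpr h).symm)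
    have hdvd2 : orderOf (u * d) ∣ p₂ := hcop.dvd_of_dvd_mul_right hdvd
    have : (u * d) ^ p₂ = 1 := orderOf_dvd_iff_pow_eq_one.mp hdvd2
    rw [hw] at this
    exact hwne this
  have hp₂N : p₂ ∣ orderOf (u * d) := by
    by_contra h
    have hcop : Nat.Coprime (orderOf (u * d)) p₂ :=
      ((Nat.Prime.coprime_iff_not_dvd hp₂).mpr h).symm
    have hNd : orderOf (u * d) ∣ p₃ ^ m := hcop.dvd_of_dvd_mul_left hdvd
    have h1 : (u * d) ^ p₃ ^ m = 1 := orderOf_dvd_iff_pow_eq_one.mp hNd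
    rw [key (p₃ ^ m)] at h1
    have humem : u ^ p₃ ^ m ∈ P₃ := by
      have heqinv : u ^ p₃ ^ m
          = (((∏ i ∈ Finset.range (p₃ ^ m), (σu ^ i) D : ↥P₃) : G))⁻¹ :=
        eq_inv_of_mul_eq_one_left ?_
      · rw [heqinv]
        exact inv_mem (∏ i ∈ Finset.range (p₃ ^ m), (σu ^ i) D : ↥P₃).2
      · exact h1
    have hu_ne : u ^ p₃ ^ m ≠ 1 := by
      intro hh
      have hdvd3 : orderOf u ∣ p₃ ^ m := orderOf_dvd_of_pow_eq_one hh
      rw [huord] at hdvd3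
      have : p₂ ∣ p₃ := hp₂.dvd_of_dvd_pow hdvd3
      exact h23 ((Nat.prime_dvd_prime_iff_eq hp₂ hp₃).mp this)
    have hdisj := IsPGroup.disjoint_of_ne p₂ p₃ h23 P₂ P₃ hP2 hP3
    have hmem2 : u ^ p₃ ^ m ∈ P₂ ⊓ P₃ := ⟨pow_mem huP _, humem⟩
    rw [disjoint_iff.mp hdisj] at hmem2
    exact hu_ne (Subgroup.mem_bot.mp hmem2)
  refine ⟨b * c, a, ?_⟩
  rintro ⟨q, k, hq, hqord⟩
  rw [hgud] at hqord
  have e2 : p₂ ∣ q ^ k := hqord ▸ hp₂N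
  have e3 : p₃ ∣ q ^ k := hqord ▸ hp₃N
  have f2 : p₂ = q := (Nat.prime_dvd_prime_iff_eq hp₂ hq).mp (hp₂.dvd_of_dvd_pow e2)
  have f3 : p₃ = q := (Nat.prime_dvd_prime_iff_eq hp₃ hq).mp (hp₃.dvd_of_dvd_pow e3)
  exact h23 (f2.trans f3.symm)
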